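/- Let P(z) = Σ_{i=0}^d b_i z^i ∈ ℂ[z] be a polynomial of degree d (b_d ≠ 0) with b_1 = 0 (so 0 is a critical point of P), and suppose P has only simple critical points, i.e. the derivative P' has d−1 distinct roots (in particular b_2 ≠ 0). Set ζ_1(z) := P'(z) − 1 and ζ_2(z) := Σ_{i=2}^d (i−1) b_i z^i. If a_1, a_2 ∈ ℂ are such that the polynomial a_1·ζ_1 + a_2·ζ_2 has vanishing coefficients in degrees 1 and d, then a_1 = a_2 = 0. (This expresses that the slice Λ = {polynomials with leading coefficient 1/d and vanishing coefficient of z} of the space Poly_d of degree d polynomials meets the orbit of P under conjugation by affine maps transversely at P.) -/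

import Mathlib

open Polynomial

noncomputable section

/-- `ζ_1 = P' − 1`, the tangent vector to the orbit of `P` coming from translations. -/
def zeta1 (Q : Polynomial ℂ) : Polynomial ℂ := Polynomial.derivative Q - 1

/-- `ζ_2 = ∑_{i=2}^d (i−1) b_i z^i`, the tangent vector coming from scalings. -/
def zeta2 (d : ℕ) (Q : Polynomial ℂ) : Polynomial ℂ :=
  ∑ i ∈ Finset.Icc 2 d, Polynomial.C (((i : ℂ) - 1) * Q.coeff i) * Polynomial.X ^ i

lemma zeta2_coeff (d : ℕ) (Q : Polynomial ℂ) (n : ℕ) :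
    (zeta2 d Q).coeff n = if n ∈ Finset.Icc 2 d then ((n : ℂ) - 1) * Q.coeff n else 0 := by
  rw [zeta2, Polynomial.finset_sum_coeff]
  rw [Finset.sum_congr rfl (fun i _ => by
    rw [Polynomial.coeff_C_mul, Polynomial.coeff_X_pow])]
  simp [Finset.sum_ite_eq', eq_comm, mul_ite]

/-- let `P(z) = ∑_{i=0}^d b_i z^i` be of degree `d` with `b_1 = 0` and with
only simple critical points (`P'` has `d−1` distinct roots). If `a_1·ζ_1 + a_2·ζ_2` has
vanishing coefficients in degrees `1` and `d`, then `a_1 = a_2 = 0`. -/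
theorem statement12 (d : ℕ) (hd : 2 ≤ d) (Q : Polynomial ℂ)
    (hdeg : Q.natDegree = d) (hb1 : Q.coeff 1 = 0)
    (hsimple : Q.derivative.roots.toFinset.card = d - 1)
    (a1 a2 : ℂ)
    (h1 : (a1 • zeta1 Q + a2 • zeta2 d Q).coeff 1 = 0)
    (hdc : (a1 • zeta1 Q + a2 • zeta2 d Q).coeff d = 0) :
    a1 = 0 ∧ a2 = 0 := by
  have hQ0 : Q ≠ 0 := by
    intro h; rw [h] at hdeg; simp at hdeg; omega
  have hbd : Q.coeff d ≠ 0 := by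
    rw [← hdeg]; exact Polynomial.coeff_ne_zero_of_eq_degree (Polynomial.degree_eq_natDegree hQ0)
  -- derivative facts
  have hc : Q.derivative.coeff (d - 1) ≠ 0 := by
    rw [Polynomial.coeff_derivative]
    have he : d - 1 + 1 = d := by omega
    rw [he]
    exact mul_ne_zero hbd (Nat.cast_add_one_ne_zero (d-1))
  have hdnat : Q.derivative.natDegree = d - 1 :=
    le_antisymm (hdeg ▸ Polynomial.natDegree_derivative_le Q)
      (Polynomial.le_natDegree_of_ne_zero hc)
  have hder0 : Q.derivative ≠ 0 := by
    intro h
    rw [h] at hdnat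
    simp at hdnat
    omega
  -- b_2 ≠ 0
  have hb2 : Q.coeff 2 ≠ 0 := by
    intro hb2
    have hcard : Multiset.card Q.derivative.roots = d - 1 := by
      have := (Polynomial.splits_iff_card_roots (f := Q.derivative)).mpr
      rw [← hdnat]
      exact (Polynomial.splits_iff_card_roots.mp (IsAlgClosed.splits _))
    have hnodup : Q.derivative.roots.Nodup := by
      rw [← Multiset.toFinset_card_eq_card_iff_nodup, hsimple, hcard]
    have hdvd : (X : Polynomial ℂ) ^ 2 ∣ Q.derivative := by
      rw [Polynomial.X_pow_dvd_iff]
      intro k hk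
      interval_cases k
      · simp [Polynomial.coeff_derivative, hb1]
      · simp [Polynomial.coeff_derivative, hb2]
    have h2le : 2 ≤ Q.derivative.rootMultiplicity 0 := by
      exact (Polynomial.le_rootMultiplicity_iff hder0).mpr (by simpa using hdvd)
    have hcount : Q.derivative.roots.count 0 ≤ 1 := Multiset.nodup_iff_count_le_one.mp hnodup 0
    rw [Polynomial.count_roots] at hcount
    omega
  -- coefficient computations
  have hz1c1 : (zeta1 Q).coeff 1 = 2 * Q.coeff 2 := by
    simp [zeta1, Polynomial.coeff_derivative, Polynomial.coeff_one]; ring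
  have hz1cd : (zeta1 Q).coeff d = 0 := by
    have : Q.derivative.coeff d = 0 := by
      apply Polynomial.coeff_eq_zero_of_natDegree_lt
      omega
    simp [zeta1, this, Polynomial.coeff_one]
    omega
  have hz2c1 : (zeta2 d Q).coeff 1 = 0 := by
    rw [zeta2_coeff]; simp
  have hz2cd : (zeta2 d Q).coeff d = ((d : ℂ) - 1) * Q.coeff d := by
    rw [zeta2_coeff]
    simp [hd]
  rw [Polynomial.coeff_add, Polynomial.coeff_smul, Polynomial.coeff_smul, hz1c1, hz2c1] at h1
  rw [Polynomial.coeff_add, Polynomial.coeff_smul, Polynomial.coeff_smul, hz1cd, hz2cd] at hdc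
  simp only [smul_eq_mul, mul_zero, add_zero, zero_add] at h1 hdc
  constructor
  · have : a1 * 2 * Q.coeff 2 = 0 := by linear_combination h1
    rcases mul_eq_zero.mp this with h | h
    · rcases mul_eq_zero.mp h with h | h
      · exact h
      · norm_num at h
    · exact absurd h hb2
  · have hdc1 : (d : ℂ) - 1 ≠ 0 := by
      intro h
      have : (d : ℂ) = 1 := by linear_combination h
      have : d = 1 := by exact_mod_cast this
      omega
    have : a2 * (((d:ℂ) - 1) * Q.coeff d) = 0 := by linear_combination hdc
    rcases mul_eq_zero.mp this with h | h
    · exact h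
    · rcases mul_eq_zero.mp h with h | h
      · exact absurd h hdc1
      · exact absurd h hbd
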